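/- Let A be a real symmetric positive definite 6×6 matrix with 3×3-block decomposition A = [[A_yy, A_yz],[A_zy, A_zz]], let J = diag(2^{−1/2}, 2^{−1/2}, 1), let B be the 6×3 matrix whose upper 3×3 block is O₃ and whose lower 3×3 block is J, let 𝒴(ζ) be the 6×6 matrix with block form [[I₃, −2^{1/2} ζ · I₃],[O₃, O₃]], and let 𝒳(ζ) = J⁻¹ A_zz⁻¹ A_zy · ( −ζ·I₃ | 2^{1/2}(ζ²/2 − 1/24)·I₃ ). Then the 6×6 matrix 𝒜 = ∫_{−1/2}^{1/2} 𝒴(ζ)ᵀ · A · (B · 𝒳′(ζ) + 𝒴(ζ)) dζ is block-diagonal: 𝒜 = [[A⁰, O₃],[O₃, (1/6)·A⁰]], where A⁰ = A_yy − A_yz · A_zz⁻¹ · A_zy is symmetric and positive definite. -/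

import Mathlib

/- STATEMENT 3: With A real symmetric positive definite 6×6, J = diag(2^{−1/2},2^{−1/2},1),
B = [[O₃],[J]], 𝒴(ζ) = [[I₃, −2^{1/2}ζI₃],[O₃,O₃]] and
𝒳(ζ) = J⁻¹ A_zz⁻¹ A_zy (−ζI₃ | 2^{1/2}(ζ²/2 − 1/24)I₃), the matrix
𝒜 = ∫_{−1/2}^{1/2} 𝒴(ζ)ᵀ A (B 𝒳′(ζ) + 𝒴(ζ)) dζ is block-diagonal:
𝒜 = [[A⁰, O₃],[O₃, (1/6)A⁰]], where A⁰ = A_yy − A_yz A_zz⁻¹ A_zy is symmetric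
positive definite. -/

open Matrix MeasureTheory

noncomputable section

def lo3 : Fin 3 → Fin 6 := fun i => ⟨i, by omega⟩
def hi3 : Fin 3 → Fin 6 := fun i => ⟨i + 3, by omega⟩

def Ayy (A : Matrix (Fin 6) (Fin 6) ℝ) : Matrix (Fin 3) (Fin 3) ℝ := A.submatrix lo3 lo3
def Ayz (A : Matrix (Fin 6) (Fin 6) ℝ) : Matrix (Fin 3) (Fin 3) ℝ := A.submatrix lo3 hi3
def Azy (A : Matrix (Fin 6) (Fin 6) ℝ) : Matrix (Fin 3) (Fin 3) ℝ := A.submatrix hi3 lo3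
def Azz (A : Matrix (Fin 6) (Fin 6) ℝ) : Matrix (Fin 3) (Fin 3) ℝ := A.submatrix hi3 hi3

/-- The Schur complement A⁰ = A_yy − A_yz · A_zz⁻¹ · A_zy. -/
def A0 (A : Matrix (Fin 6) (Fin 6) ℝ) : Matrix (Fin 3) (Fin 3) ℝ :=
  Ayy A - Ayz A * (Azz A)⁻¹ * Azy A

def Jmat : Matrix (Fin 3) (Fin 3) ℝ :=
  Matrix.diagonal ![(Real.sqrt 2)⁻¹, (Real.sqrt 2)⁻¹, 1]

/-- Horizontal concatenation ( M | N ) of two 3×3 blocks into a 3×6 matrix. -/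
def hcat (M N : Matrix (Fin 3) (Fin 3) ℝ) : Matrix (Fin 3) (Fin 6) ℝ :=
  Matrix.of fun i j =>
    if h : (j : ℕ) < 3 then M i ⟨j, h⟩ else N i ⟨(j : ℕ) - 3, by omega⟩

/-- Vertical concatenation of two 3×3 blocks into a 6×3 matrix. -/
def vcat (M N : Matrix (Fin 3) (Fin 3) ℝ) : Matrix (Fin 6) (Fin 3) ℝ :=
  Matrix.of fun i j =>
    if h : (i : ℕ) < 3 then M ⟨i, h⟩ j else N ⟨(i : ℕ) - 3, by omega⟩ j

/-- Vertical stacking of two 3×6 blocks into a 6×6 matrix. -/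
def vstack (M N : Matrix (Fin 3) (Fin 6) ℝ) : Matrix (Fin 6) (Fin 6) ℝ :=
  Matrix.of fun i j =>
    if h : (i : ℕ) < 3 then M ⟨i, h⟩ j else N ⟨(i : ℕ) - 3, by omega⟩ j

/-- 6×6 matrix from four 3×3 blocks [[P, Q],[R, S]]. -/
def blocks66 (P Q R S : Matrix (Fin 3) (Fin 3) ℝ) : Matrix (Fin 6) (Fin 6) ℝ :=
  vstack (hcat P Q) (hcat R S)

def Bmat : Matrix (Fin 6) (Fin 3) ℝ := vcat 0 Jmat

def Ymat (ζ : ℝ) : Matrix (Fin 6) (Fin 6) ℝ :=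
  blocks66 (1 : Matrix (Fin 3) (Fin 3) ℝ)
    ((-(Real.sqrt 2) * ζ) • (1 : Matrix (Fin 3) (Fin 3) ℝ)) 0 0

def Xmat (A : Matrix (Fin 6) (Fin 6) ℝ) (ζ : ℝ) : Matrix (Fin 3) (Fin 6) ℝ :=
  Jmat⁻¹ * (Azz A)⁻¹ * Azy A *
    hcat ((-ζ) • (1 : Matrix (Fin 3) (Fin 3) ℝ))
      ((Real.sqrt 2 * (ζ ^ 2 / 2 - 1 / 24)) • (1 : Matrix (Fin 3) (Fin 3) ℝ))

/-- Entrywise derivative 𝒳′(ζ). -/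
def Xd (A : Matrix (Fin 6) (Fin 6) ℝ) (ζ : ℝ) : Matrix (Fin 3) (Fin 6) ℝ :=
  Matrix.of fun i j => deriv (fun t => Xmat A t i j) ζ

/-- The entrywise integral 𝒜 = ∫_{−1/2}^{1/2} 𝒴(ζ)ᵀ A (B 𝒳′(ζ) + 𝒴(ζ)) dζ. -/
def calA (A : Matrix (Fin 6) (Fin 6) ℝ) : Matrix (Fin 6) (Fin 6) ℝ :=
  Matrix.of fun i j =>
    ∫ ζ in (-(1 : ℝ) / 2)..(1 / 2), ((Ymat ζ)ᵀ * A * (Bmat * Xd A ζ + Ymat ζ)) i j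
def e33 : Fin 3 ⊕ Fin 3 ≃ Fin 6 := finSumFinEquiv

lemma e33_inl (a : Fin 3) : e33 (Sum.inl a) = lo3 a := by
  simp [e33, lo3, finSumFinEquiv, Fin.ext_iff]

lemma e33_inr (a : Fin 3) : e33 (Sum.inr a) = hi3 a := by
  simp [e33, hi3, finSumFinEquiv, Fin.ext_iff, Nat.add_comm]

lemma lo3_lt (a : Fin 3) : ((lo3 a : Fin 6) : ℕ) < 3 := a.2
lemma hi3_not_lt (a : Fin 3) : ¬ ((hi3 a : Fin 6) : ℕ) < 3 := by simp [hi3]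

lemma blocks66_submatrix (P Q R S : Matrix (Fin 3) (Fin 3) ℝ) :
    (blocks66 P Q R S).submatrix e33 e33 = Matrix.fromBlocks P Q R S := by
  ext i j
  cases i <;> cases j <;>
    simp [blocks66, vstack, hcat, e33_inl, e33_inr, lo3, hi3, Matrix.fromBlocks]

lemma A_submatrix (A : Matrix (Fin 6) (Fin 6) ℝ) :
    A.submatrix e33 e33 = Matrix.fromBlocks (Ayy A) (Ayz A) (Azy A) (Azz A) := by
  ext i j
  cases i <;> cases j <;>
    simp [Ayy, Ayz, Azy, Azz, e33_inl, e33_inr, Matrix.fromBlocks]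

lemma B_submatrix :
    Bmat.submatrix e33 id = Matrix.fromRows 0 Jmat := by
  ext i j
  cases i <;>
    simp [Bmat, vcat, e33_inl, e33_inr, lo3, hi3]

lemma hcat_submatrix (X Y : Matrix (Fin 3) (Fin 3) ℝ) :
    (hcat X Y).submatrix id e33 = Matrix.fromCols X Y := by
  ext i j
  cases j <;> simp [hcat, e33_inl, e33_inr, lo3, hi3]

lemma submatrix_inj {X Y : Matrix (Fin 6) (Fin 6) ℝ}
    (h : X.submatrix e33 e33 = Y.submatrix e33 e33) : X = Y := by
  have := congrArg (fun M => Matrix.submatrix M e33.symm e33.symm) h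
  simpa [Matrix.submatrix_submatrix, Function.comp] using this
lemma mul_hcat (M X Y : Matrix (Fin 3) (Fin 3) ℝ) :
    M * hcat X Y = hcat (M * X) (M * Y) := by
  ext i j
  by_cases h : (j : ℕ) < 3 <;> simp [hcat, Matrix.mul_apply, h]

def Cm (A : Matrix (Fin 6) (Fin 6) ℝ) : Matrix (Fin 3) (Fin 3) ℝ :=
  Jmat⁻¹ * (Azz A)⁻¹ * Azy A

lemma Xmat_eq (A : Matrix (Fin 6) (Fin 6) ℝ) (ζ : ℝ) :
    Xmat A ζ = hcat ((-ζ) • Cm A) ((Real.sqrt 2 * (ζ ^ 2 / 2 - 1 / 24)) • Cm A) := by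
  rw [Xmat, mul_hcat]
  simp [Matrix.mul_smul, Cm]

lemma Xd_eq (A : Matrix (Fin 6) (Fin 6) ℝ) (ζ : ℝ) :
    Xd A ζ = hcat ((-1 : ℝ) • Cm A) ((Real.sqrt 2 * ζ) • Cm A) := by
  ext i j
  by_cases h : (j : ℕ) < 3
  · have hf : (fun t => Xmat A t i j) = fun t => (- Cm A i ⟨j, h⟩) * t := by
      funext t
      simp [Xmat_eq, hcat, h]
      ring
    have hd : HasDerivAt (fun t : ℝ => (- Cm A i ⟨j, h⟩) * t) (- Cm A i ⟨j, h⟩) ζ := by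
      simpa using (hasDerivAt_id ζ).const_mul (- Cm A i ⟨j, h⟩)
    simp only [Xd, Matrix.of_apply, hf, hd.deriv]
    simp [hcat, h]
  · have h3 : (j : ℕ) - 3 < 3 := by omega
    set c := Cm A i ⟨(j : ℕ) - 3, h3⟩ with hc
    have hf : (fun t => Xmat A t i j) = fun t => Real.sqrt 2 * (t ^ 2 / 2 - 1 / 24) * c := by
      funext t
      simp [Xmat_eq, hcat, h, hc]
    have hd : HasDerivAt (fun t : ℝ => Real.sqrt 2 * (t ^ 2 / 2 - 1 / 24) * c)
        (Real.sqrt 2 * ζ * c) ζ := by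
      have h1 : HasDerivAt (fun t : ℝ => t ^ 2 / 2 - 1 / 24) (ζ) ζ := by
        have := ((hasDerivAt_pow 2 ζ).div_const 2).sub_const (1 / 24)
        exact this.congr_deriv (by norm_num)
      simpa using (h1.const_mul (Real.sqrt 2)).mul_const c
    simp only [Xd, Matrix.of_apply, hf, hd.deriv]
    simp [hcat, h, hc]
lemma Jmat_mul_inv : Jmat * Jmat⁻¹ = 1 := by
  apply Matrix.mul_nonsing_inv
  have : Jmat.det = (Real.sqrt 2)⁻¹ * ((Real.sqrt 2)⁻¹ * 1) := by
    simp [Jmat, Matrix.det_diagonal, Fin.prod_univ_three]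
  rw [this]
  exact isUnit_iff_ne_zero.mpr (by positivity)

lemma A_submatrix_posDef {A : Matrix (Fin 6) (Fin 6) ℝ} (hA : A.PosDef) :
    (A.submatrix e33 e33).PosDef := by
  refine Matrix.PosDef.of_dotProduct_mulVec_pos (hA.1.submatrix e33) (fun x hx => ?_)
  rw [Matrix.submatrix_mulVec_equiv]
  have hxe : (x ∘ e33.symm) ≠ 0 := by
    intro hcon
    apply hx
    funext i
    have := congrFun hcon (e33 i)
    simpa using this
  have := hA.dotProduct_mulVec_pos hxe
  convert this using 1
  exact (comp_equiv_symm_dotProduct (star x) _ e33).symm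


lemma fromBlocks_A (A : Matrix (Fin 6) (Fin 6) ℝ) (hA : A.PosDef) :
    (Matrix.fromBlocks (Ayy A) (Ayz A) (Azy A) (Azz A)).PosDef := by
  rw [← A_submatrix]; exact A_submatrix_posDef hA

lemma Azy_eq {A : Matrix (Fin 6) (Fin 6) ℝ} (hA : A.PosDef) : Azy A = (Ayz A)ᴴ := by
  ext i j
  have := congrFun (congrFun hA.1 (hi3 i)) (lo3 j)
  simpa [Azy, Ayz, Matrix.conjTranspose_apply] using this.symm

lemma Azz_posDef {A : Matrix (Fin 6) (Fin 6) ℝ} (hA : A.PosDef) : (Azz A).PosDef := by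
  have hfb := fromBlocks_A A hA
  refine Matrix.PosDef.of_dotProduct_mulVec_pos (hA.1.submatrix hi3) (fun y hy => ?_)
  have hne : (Sum.elim (0 : Fin 3 → ℝ) y) ≠ 0 := by
    intro hcon
    apply hy
    funext i
    simpa using congrFun hcon (Sum.inr i)
  have := hfb.dotProduct_mulVec_pos hne
  simpa [Matrix.fromBlocks_mulVec, dotProduct, Fintype.sum_sum_type] using this
lemma Azz_mul_inv {A : Matrix (Fin 6) (Fin 6) ℝ} (hA : A.PosDef) :
    Azz A * (Azz A)⁻¹ = 1 :=
  Matrix.mul_nonsing_inv _ (Azz_posDef hA).det_pos.ne'.isUnit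

lemma Jmat_mul_Cm (A : Matrix (Fin 6) (Fin 6) ℝ) :
    Jmat * Cm A = (Azz A)⁻¹ * Azy A := by
  rw [Cm, ← Matrix.mul_assoc, ← Matrix.mul_assoc, Jmat_mul_inv, Matrix.one_mul]

lemma sqrt2_sq : Real.sqrt 2 * Real.sqrt 2 = 2 := Real.mul_self_sqrt (by norm_num)

lemma integrand_eq (A : Matrix (Fin 6) (Fin 6) ℝ) (hA : A.PosDef) (ζ : ℝ) :
    (Ymat ζ)ᵀ * A * (Bmat * Xd A ζ + Ymat ζ) =
      blocks66 (A0 A) ((-(Real.sqrt 2) * ζ) • A0 A)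
        ((-(Real.sqrt 2) * ζ) • A0 A) ((2 * ζ ^ 2) • A0 A) := by
  set K : Matrix (Fin 3) (Fin 3) ℝ := (Azz A)⁻¹ * Azy A with hK
  apply submatrix_inj
  rw [blocks66_submatrix]
  have hBXd : (Bmat * Xd A ζ).submatrix e33 e33 =
      Matrix.fromBlocks 0 0 (-K) ((Real.sqrt 2 * ζ) • K) := by
    rw [← Matrix.submatrix_mul_equiv Bmat (Xd A ζ) _ (Equiv.refl (Fin 3)) _]
    have : (Xd A ζ).submatrix (Equiv.refl (Fin 3)) e33 =
        Matrix.fromCols ((-1 : ℝ) • Cm A) ((Real.sqrt 2 * ζ) • Cm A) := by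
      rw [Xd_eq]; exact hcat_submatrix _ _
    rw [this, show (Bmat.submatrix (⇑e33) ⇑(Equiv.refl (Fin 3))) = Bmat.submatrix e33 id from rfl,
      B_submatrix]
    simp only [Matrix.fromRows_mul, Matrix.mul_fromCols, Matrix.zero_mul,
      Matrix.mul_smul, Jmat_mul_Cm, ← hK]
    ext i j
    cases i <;> cases j <;>
      simp [Matrix.fromBlocks]
  have hY : (Ymat ζ).submatrix e33 e33 =
      Matrix.fromBlocks 1 ((-(Real.sqrt 2) * ζ) • 1) 0 0 := blocks66_submatrix _ _ _ _
  have hYT : ((Ymat ζ)ᵀ).submatrix e33 e33 =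
      Matrix.fromBlocks 1 0 ((-(Real.sqrt 2) * ζ) • 1) 0 := by
    rw [← Matrix.transpose_submatrix, hY, Matrix.fromBlocks_transpose]
    simp
  rw [← Matrix.submatrix_mul_equiv _ _ _ e33 _, ← Matrix.submatrix_mul_equiv _ _ _ e33 _]
  have hsum : (Bmat * Xd A ζ + Ymat ζ).submatrix e33 e33 =
      Matrix.fromBlocks 1 ((-(Real.sqrt 2) * ζ) • 1) (-K) ((Real.sqrt 2 * ζ) • K) := by
    rw [show (Bmat * Xd A ζ + Ymat ζ).submatrix e33 e33 =
        (Bmat * Xd A ζ).submatrix e33 e33 + (Ymat ζ).submatrix e33 e33 from rfl,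
      hBXd, hY, Matrix.fromBlocks_add]
    simp
  rw [hsum, hYT, A_submatrix, Matrix.fromBlocks_multiply, Matrix.fromBlocks_multiply]
  have hcancel : Azz A * K = Azy A := by
    rw [hK, ← Matrix.mul_assoc, Azz_mul_inv hA, Matrix.one_mul]
  have hA0 : A0 A = Ayy A - Ayz A * K := by
    rw [A0, Matrix.mul_assoc, hK]
  have h2a : (-(Real.sqrt 2) * ζ) * (-(Real.sqrt 2) * ζ) = 2 * ζ ^ 2 := by
    rw [show (2:ℝ) * ζ ^ 2 = (Real.sqrt 2 * Real.sqrt 2) * ζ ^ 2 by rw [sqrt2_sq]]; ring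
  have h2b : (-(Real.sqrt 2) * ζ) * (Real.sqrt 2 * ζ) = -(2 * ζ ^ 2) := by
    rw [show (2:ℝ) * ζ ^ 2 = (Real.sqrt 2 * Real.sqrt 2) * ζ ^ 2 by rw [sqrt2_sq]]; ring
  have h2c : (Real.sqrt 2 * ζ) * (-(Real.sqrt 2) * ζ) = -(2 * ζ ^ 2) := by
    rw [show (2:ℝ) * ζ ^ 2 = (Real.sqrt 2 * Real.sqrt 2) * ζ ^ 2 by rw [sqrt2_sq]]; ring
  rw [Matrix.fromBlocks_inj]
  refine ⟨?_, ?_, ?_, ?_⟩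
  · simp [hA0, Matrix.mul_neg, sub_eq_add_neg]
  · simp only [Matrix.one_mul, Matrix.zero_mul, add_zero, Matrix.mul_smul, Matrix.mul_one,
      hA0, smul_sub]
    rw [show (Real.sqrt 2 * ζ) = -(-(Real.sqrt 2) * ζ) by ring, neg_smul, sub_eq_add_neg]
  · simp only [Matrix.zero_mul, add_zero, Matrix.smul_mul, Matrix.one_mul, Matrix.mul_one,
      Matrix.mul_neg, hA0, smul_sub, sub_eq_add_neg, smul_neg, smul_add]
  · simp only [Matrix.zero_mul, add_zero, Matrix.smul_mul, Matrix.mul_smul, Matrix.one_mul,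
      Matrix.mul_one, smul_smul, h2a, h2b, h2c, hA0, smul_sub, sub_eq_add_neg, neg_smul,
      smul_neg, smul_add]
lemma int_const (c : ℝ) : ∫ _ζ in (-(1:ℝ)/2)..(1/2), c = c := by
  rw [intervalIntegral.integral_const]; norm_num

lemma int_lin (c : ℝ) : ∫ ζ in (-(1:ℝ)/2)..(1/2), (-(Real.sqrt 2) * ζ) * c = 0 := by
  have h : ∀ ζ : ℝ, (-(Real.sqrt 2) * ζ) * c = (-(Real.sqrt 2) * c) * ζ := fun ζ => by ring
  simp only [h]
  rw [intervalIntegral.integral_const_mul, integral_id]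
  norm_num

lemma int_quad (c : ℝ) : ∫ ζ in (-(1:ℝ)/2)..(1/2), (2 * ζ ^ 2) * c = 1 / 6 * c := by
  have h : ∀ ζ : ℝ, (2 * ζ ^ 2) * c = (2 * c) * ζ ^ 2 := fun ζ => by ring
  simp only [h]
  rw [intervalIntegral.integral_const_mul, integral_pow]
  norm_num
  ring

lemma A0_posDef {A : Matrix (Fin 6) (Fin 6) ℝ} (hA : A.PosDef) : (A0 A).PosDef := by
  have hD : (Azz A).IsHermitian := hA.1.submatrix hi3
  have hAyy : (Ayy A).IsHermitian := hA.1.submatrix lo3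
  haveI : Invertible (Azz A) :=
    (Azz A).invertibleOfIsUnitDet (Azz_posDef hA).det_pos.ne'.isUnit
  have hfb := fromBlocks_A A hA
  rw [Azy_eq hA] at hfb
  have hA0eq : A0 A = Ayy A - Ayz A * (Azz A)⁻¹ * (Ayz A)ᴴ := by
    rw [A0, Azy_eq hA]
  refine Matrix.PosDef.of_dotProduct_mulVec_pos ?_ ?_
  · rw [hA0eq]
    show _ = _
    rw [Matrix.conjTranspose_sub, Matrix.conjTranspose_mul, Matrix.conjTranspose_mul,
      Matrix.conjTranspose_conjTranspose, Matrix.conjTranspose_nonsing_inv, hD.eq, hAyy.eq,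
      Matrix.mul_assoc]
  · intro x hx
    set y : Fin 3 → ℝ := -(((Azz A)⁻¹ * (Ayz A)ᴴ) *ᵥ x) with hy
    have key := Matrix.schur_complement_eq₂₂ (Ayy A) (Ayz A) x y hD
    have hzero : ((Azz A)⁻¹ * (Ayz A)ᴴ) *ᵥ x + y = 0 := by
      rw [hy]; exact add_neg_cancel _
    rw [hzero] at key
    simp only [star_zero, Matrix.zero_vecMul, zero_dotProduct, zero_add] at key
    have hne : Sum.elim x y ≠ 0 := by
      intro hcon
      apply hx
      funext i
      simpa using congrFun hcon (Sum.inl i)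
    have hpos := hfb.dotProduct_mulVec_pos hne
    rw [Matrix.dotProduct_mulVec, key] at hpos
    rw [hA0eq]
    rwa [Matrix.dotProduct_mulVec]
theorem calA_block_diagonal (A : Matrix (Fin 6) (Fin 6) ℝ) (hA : A.PosDef) :
    calA A = blocks66 (A0 A) 0 0 ((1 / 6 : ℝ) • A0 A) ∧ (A0 A).PosDef := by
  refine ⟨?_, A0_posDef hA⟩
  ext i j
  simp only [calA, Matrix.of_apply, integrand_eq A hA]
  by_cases hi : (i : ℕ) < 3 <;> by_cases hj : (j : ℕ) < 3 <;>
    simp only [blocks66, vstack, hcat, Matrix.of_apply, hi, hj, dif_pos, dif_neg,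
      not_false_iff, Matrix.smul_apply, smul_eq_mul, Matrix.zero_apply]
  · exact int_const _
  · exact int_lin _
  · exact int_lin _
  · exact int_quad _
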